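/- Distance bound from the Reg-one(t) set to the complementarity set: equip ℝ^q × ℝ^q with the Euclidean norm. If t ≥ 0 and (x1, x2) ∈ R1(t), then the distance from (x1, x2) to the complementarity set C (the infimum of Euclidean distances to points of C) is at most √t. -/

import Mathlib

/-- Distance bound from the Reg-one(t) set to the complementarity set, in the
Euclidean norm on ℝ^q × ℝ^q ≅ ℝ^{2q}: points of R1(t) are within √t of C. -/
theorem stmt_10 (q : ℕ) (hq : 0 < q) (t : ℝ) (ht : 0 ≤ t)
    (x : EuclideanSpace ℝ (Fin q ⊕ Fin q))
    (h1 : ∀ j, 0 ≤ x (Sum.inl j)) (h2 : ∀ j, 0 ≤ x (Sum.inr j))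
    (hsum : (∑ j, x (Sum.inl j) * x (Sum.inr j)) ≤ t) :
    Metric.infDist x
      {y : EuclideanSpace ℝ (Fin q ⊕ Fin q) |
        ∀ j, 0 ≤ y (Sum.inl j) ∧ 0 ≤ y (Sum.inr j) ∧
          y (Sum.inl j) * y (Sum.inr j) = 0}
      ≤ Real.sqrt t := by
  classical
  set y : EuclideanSpace ℝ (Fin q ⊕ Fin q) :=
    WithLp.toLp 2 (fun i => Sum.elim
      (fun j => if x (Sum.inl j) ≤ x (Sum.inr j) then 0 else x (Sum.inl j))
      (fun j => if x (Sum.inl j) ≤ x (Sum.inr j) then x (Sum.inr j) else 0) i)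
    with hy
  have hmem : y ∈ {y : EuclideanSpace ℝ (Fin q ⊕ Fin q) |
      ∀ j, 0 ≤ y (Sum.inl j) ∧ 0 ≤ y (Sum.inr j) ∧
        y (Sum.inl j) * y (Sum.inr j) = 0} := by
    intro j
    simp only [hy, PiLp.toLp_apply, Sum.elim_inl, Sum.elim_inr]
    by_cases h : x (Sum.inl j) ≤ x (Sum.inr j) <;>
      simp [h, h1 j, h2 j]
  refine le_trans (Metric.infDist_le_dist_of_mem hmem) ?_
  rw [EuclideanSpace.dist_eq]
  apply Real.sqrt_le_sqrt
  refine le_trans ?_ hsum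
  rw [Fintype.sum_sum_type]
  have key : ∀ j : Fin q,
      dist (x (Sum.inl j)) (y (Sum.inl j)) ^ 2 +
        dist (x (Sum.inr j)) (y (Sum.inr j)) ^ 2 ≤
      x (Sum.inl j) * x (Sum.inr j) := by
    intro j
    simp only [hy, PiLp.toLp_apply, Sum.elim_inl, Sum.elim_inr, Real.dist_eq]
    by_cases h : x (Sum.inl j) ≤ x (Sum.inr j)
    · simp only [h, if_true, sub_zero, sub_self, abs_zero]
      rw [sq_abs]
      nlinarith [h1 j, h2 j]
    · simp only [h, if_false, sub_zero, sub_self, abs_zero]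
      rw [sq_abs]
      nlinarith [h1 j, h2 j, not_le.mp h]
  calc (∑ j, dist (x (Sum.inl j)) (y (Sum.inl j)) ^ 2) +
        ∑ j, dist (x (Sum.inr j)) (y (Sum.inr j)) ^ 2
      = ∑ j : Fin q, (dist (x (Sum.inl j)) (y (Sum.inl j)) ^ 2 +
          dist (x (Sum.inr j)) (y (Sum.inr j)) ^ 2) := by
        rw [Finset.sum_add_distrib]
    _ ≤ ∑ j, x (Sum.inl j) * x (Sum.inr j) := Finset.sum_le_sum fun j _ => key j
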